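/- Let H be a complex Hilbert space and L a bounded, non-negative, self-adjoint operator on H. Let α, μ be real numbers with 0 ≤ α ≤ 1, 0 ≤ μ < 1 and α + μ ≤ 1, and set δ = 1 - α - μ. Then for every t > 0, ‖∫₀ᵗ s^{-μ} L^α e^{-(t-s)L} ds‖ ≤ t^δ (1-μ)^{α-1}, where ‖·‖ is the operator norm of the Bochner integral of the operator-valued function s ↦ s^{-μ} L^α e^{-(t-s)L}. -/

import Mathlib

open MeasureTheory

/-- `L^α e^{-rL}`, defined by the continuous functional calculus of the self-adjoint
operator `L` applied to `λ ↦ λ^α e^{-rλ}`. -/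
noncomputable def opPow {H : Type*} [NormedAddCommGroup H] [InnerProductSpace ℂ H]
    [CompleteSpace H] (L : H →L[ℂ] H) (α r : ℝ) : H →L[ℂ] H :=
  cfc (fun lam : ℝ => lam ^ α * Real.exp (-r * lam)) L

open MeasureTheory intervalIntegral Set
set_option maxHeartbeats 1000000

lemma continuous_rpow_const' {α : ℝ} (hα : 0 ≤ α) : Continuous fun x : ℝ => x ^ α := by
  exact continuous_iff_continuousAt.mpr fun x =>
    Real.continuousAt_rpow_const x α (Or.inr hα)

lemma int_rpow_eval {μ a : ℝ} (hμ0 : 0 ≤ μ) (hμ1 : μ < 1) (ha : 0 ≤ a) :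
    ∫ s in (0:ℝ)..a, s ^ (-μ) = a ^ (1 - μ) / (1 - μ) := by
  rw [integral_rpow (Or.inl (by linarith))]
  rw [Real.zero_rpow (by linarith : -μ + 1 ≠ 0)]
  norm_num
  ring_nf

lemma int_exp_eval {lam : ℝ} (hlam : 0 < lam) (t a b : ℝ) :
    ∫ s in a..b, Real.exp (-(t - s) * lam)
      = (Real.exp (-(t - b) * lam) - Real.exp (-(t - a) * lam)) / lam := by
  have key : ∀ s : ℝ, HasDerivAt (fun u : ℝ => Real.exp (-(t - u) * lam) / lam)
      (Real.exp (-(t - s) * lam)) s := by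
    intro s
    have h1 : HasDerivAt (fun u : ℝ => -(t - u) * lam) lam s := by
      simpa using (((hasDerivAt_id s).const_sub t).neg.mul_const lam)
    have h2 := (Real.hasDerivAt_exp (-(t - s) * lam)).comp s h1
    have h3 := h2.div_const lam
    simpa [mul_div_assoc, div_self hlam.ne'] using h3
  rw [integral_eq_sub_of_hasDerivAt (fun s _ => key s)
    ((Real.continuous_exp.comp (by continuity)).intervalIntegrable a b)]
  rw [sub_div]

lemma scalar_integrable {α μ t lam : ℝ} (hα0 : 0 ≤ α) (hμ0 : 0 ≤ μ) (hμ1 : μ < 1)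
    (ht : 0 < t) (hlam : 0 ≤ lam) :
    IntervalIntegrable (fun s => s ^ (-μ) * (lam ^ α * Real.exp (-(t - s) * lam)))
      volume 0 t := by
  rw [intervalIntegrable_iff_integrableOn_Ioc_of_le ht.le]
  have hmaj : IntegrableOn (fun s : ℝ => lam ^ α * s ^ (-μ)) (Ioc 0 t) := by
    have h1 : IntervalIntegrable (fun s : ℝ => s ^ (-μ)) volume 0 t :=
      intervalIntegrable_rpow' (by linarith)
    rw [intervalIntegrable_iff_integrableOn_Ioc_of_le ht.le] at h1
    exact h1.const_mul _
  refine Integrable.mono' hmaj ?_ ?_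
  · apply ContinuousOn.aestronglyMeasurable _ measurableSet_Ioc
    apply ContinuousOn.mul
    · exact ContinuousOn.rpow_const continuousOn_id (fun x hx => Or.inl (ne_of_gt hx.1))
    · exact (continuous_const.mul (Real.continuous_exp.comp (by continuity))).continuousOn
  · filter_upwards [ae_restrict_mem measurableSet_Ioc] with s hs
    have h0 : (0:ℝ) ≤ s ^ (-μ) := Real.rpow_nonneg hs.1.le _
    have h1 : Real.exp (-(t - s) * lam) ≤ 1 := by
      rw [Real.exp_le_one_iff]
      have : 0 ≤ (t - s) * lam := mul_nonneg (by linarith [hs.2]) hlam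
      linarith
    have h2 : (0:ℝ) ≤ lam ^ α := Real.rpow_nonneg hlam _
    rw [Real.norm_eq_abs, abs_of_nonneg (by positivity)]
    calc s ^ (-μ) * (lam ^ α * Real.exp (-(t - s) * lam))
        ≤ s ^ (-μ) * (lam ^ α * 1) := by
          apply mul_le_mul_of_nonneg_left _ h0
          exact mul_le_mul_of_nonneg_left h1 h2
      _ = lam ^ α * s ^ (-μ) := by ring

lemma scalar_bound512 {α μ t lam : ℝ} (hα0 : 0 ≤ α) (hμ0 : 0 ≤ μ) (hμ1 : μ < 1)
    (hαμ : α + μ ≤ 1) (ht : 0 < t) (hlam : 0 ≤ lam) :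
    ∫ s in Set.Ioo (0:ℝ) t, s ^ (-μ) * (lam ^ α * Real.exp (-(t - s) * lam))
      ≤ t ^ (1 - α - μ) * (1 - μ) ^ (α - 1) := by
  have hc : (0:ℝ) < 1 - μ := by linarith
  have hRHS : (0:ℝ) ≤ t ^ (1 - α - μ) * (1 - μ) ^ (α - 1) := by positivity
  -- convert to interval integral
  rw [← integral_Ioc_eq_integral_Ioo, ← intervalIntegral.integral_of_le ht.le]
  rcases hlam.eq_or_lt with rfl | hlam'
  · -- lam = 0
    rcases hα0.eq_or_lt with rfl | hα'
    · simp only [Real.rpow_zero, mul_zero, neg_zero, Real.exp_zero, one_mul, mul_one]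
      rw [int_rpow_eval hμ0 hμ1 ht.le]
      rw [sub_zero, show (0:ℝ) - 1 = -1 by ring, Real.rpow_neg_one, div_eq_mul_inv]
    · simp only [Real.zero_rpow hα'.ne', zero_mul, mul_zero]
      simpa using hRHS
  · -- lam > 0
    have hint := scalar_integrable hα0 hμ0 hμ1 ht hlam
    rcases le_or_gt (t * lam) (1 - μ) with hcase | hcase
    · -- small t * lam
      have mono : ∫ s in (0:ℝ)..t, s ^ (-μ) * (lam ^ α * Real.exp (-(t - s) * lam))
          ≤ ∫ s in (0:ℝ)..t, lam ^ α * s ^ (-μ) := by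
        apply intervalIntegral.integral_mono_on ht.le hint
        · exact (intervalIntegrable_rpow' (by linarith)).const_mul _
        · intro s hs
          have h0 : (0:ℝ) ≤ s ^ (-μ) := Real.rpow_nonneg hs.1 _
          have h1 : Real.exp (-(t - s) * lam) ≤ 1 := by
            rw [Real.exp_le_one_iff]
            have : 0 ≤ (t - s) * lam := mul_nonneg (by linarith [hs.2]) hlam
            linarith
          calc s ^ (-μ) * (lam ^ α * Real.exp (-(t - s) * lam))
              ≤ s ^ (-μ) * (lam ^ α * 1) := by
                exact mul_le_mul_of_nonneg_left
                  (mul_le_mul_of_nonneg_left h1 (Real.rpow_nonneg hlam _)) h0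
            _ = lam ^ α * s ^ (-μ) := by ring
      rw [intervalIntegral.integral_const_mul, int_rpow_eval hμ0 hμ1 ht.le] at mono
      refine mono.trans ?_
      have e1 : lam ^ α * (t ^ (1 - μ) / (1 - μ))
          = (lam * t) ^ α * t ^ (1 - α - μ) / (1 - μ) := by
        rw [Real.mul_rpow hlam ht.le]
        rw [show (1:ℝ) - μ = α + (1 - α - μ) by ring, Real.rpow_add ht]
        ring
      rw [e1]
      have e2 : (lam * t) ^ α ≤ (1 - μ) ^ α := by
        apply Real.rpow_le_rpow (by positivity) _ hα0
        rw [mul_comm]; exact hcase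
      calc (lam * t) ^ α * t ^ (1 - α - μ) / (1 - μ)
          ≤ (1 - μ) ^ α * t ^ (1 - α - μ) / (1 - μ) := by
            gcongr
        _ = t ^ (1 - α - μ) * (1 - μ) ^ (α - 1) := by
            rw [Real.rpow_sub_one hc.ne']
            ring
    · -- large t * lam : split at s₀ = (1-μ)/lam
      set s₀ := (1 - μ) / lam with hs₀def
      have hs₀pos : 0 < s₀ := div_pos hc hlam'
      have hs₀t : s₀ ≤ t := by
        rw [div_le_iff₀ hlam']; linarith
      set E₀ := Real.exp (-(t - s₀) * lam) with hE₀def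
      have hE₀pos : 0 < E₀ := Real.exp_pos _
      have hE₀le : E₀ ≤ 1 := by
        rw [hE₀def, Real.exp_le_one_iff]
        have : 0 ≤ (t - s₀) * lam := mul_nonneg (by linarith) hlam'.le
        linarith
      have hsub1 : Set.uIcc (0:ℝ) s₀ ⊆ Set.uIcc 0 t := by
        rw [Set.uIcc_of_le ht.le, Set.uIcc_of_le hs₀pos.le]
        exact Set.Icc_subset_Icc le_rfl hs₀t
      have hsub2 : Set.uIcc s₀ t ⊆ Set.uIcc 0 t := by
        rw [Set.uIcc_of_le ht.le, Set.uIcc_of_le hs₀t]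
        exact Set.Icc_subset_Icc hs₀pos.le le_rfl
      have hint1 := hint.mono_set hsub1
      have hint2 := hint.mono_set hsub2
      rw [← intervalIntegral.integral_add_adjacent_intervals hint1 hint2]
      -- first piece
      have hJ1 : ∫ s in (0:ℝ)..s₀, s ^ (-μ) * (lam ^ α * Real.exp (-(t - s) * lam))
          ≤ lam ^ α * E₀ * (s₀ ^ (1 - μ) / (1 - μ)) := by
        have : ∫ s in (0:ℝ)..s₀, s ^ (-μ) * (lam ^ α * Real.exp (-(t - s) * lam))
            ≤ ∫ s in (0:ℝ)..s₀, (lam ^ α * E₀) * s ^ (-μ) := by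
          apply intervalIntegral.integral_mono_on hs₀pos.le hint1
          · exact (intervalIntegrable_rpow' (by linarith)).const_mul _
          · intro s hs
            have h0 : (0:ℝ) ≤ s ^ (-μ) := Real.rpow_nonneg hs.1 _
            have h1 : Real.exp (-(t - s) * lam) ≤ E₀ := by
              rw [hE₀def, Real.exp_le_exp]
              have : s ≤ s₀ := hs.2
              nlinarith
            calc s ^ (-μ) * (lam ^ α * Real.exp (-(t - s) * lam))
                ≤ s ^ (-μ) * (lam ^ α * E₀) := by
                  exact mul_le_mul_of_nonneg_left
                    (mul_le_mul_of_nonneg_left h1 (Real.rpow_nonneg hlam _)) h0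
              _ = (lam ^ α * E₀) * s ^ (-μ) := by ring
        rw [intervalIntegral.integral_const_mul, int_rpow_eval hμ0 hμ1 hs₀pos.le] at this
        exact this
      -- second piece
      have hJ2 : ∫ s in s₀..t, s ^ (-μ) * (lam ^ α * Real.exp (-(t - s) * lam))
          ≤ s₀ ^ (-μ) * lam ^ α * ((1 - E₀) / lam) := by
        have : ∫ s in s₀..t, s ^ (-μ) * (lam ^ α * Real.exp (-(t - s) * lam))
            ≤ ∫ s in s₀..t, (s₀ ^ (-μ) * lam ^ α) * Real.exp (-(t - s) * lam) := by
          apply intervalIntegral.integral_mono_on hs₀t hint2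
          · exact ((Real.continuous_exp.comp (by continuity)).intervalIntegrable
              s₀ t).const_mul _
          · intro s hs
            have h1 : s ^ (-μ) ≤ s₀ ^ (-μ) :=
              Real.rpow_le_rpow_of_nonpos hs₀pos hs.1 (by linarith)
            calc s ^ (-μ) * (lam ^ α * Real.exp (-(t - s) * lam))
                ≤ s₀ ^ (-μ) * (lam ^ α * Real.exp (-(t - s) * lam)) := by
                  exact mul_le_mul_of_nonneg_right h1 (by positivity)
              _ = (s₀ ^ (-μ) * lam ^ α) * Real.exp (-(t - s) * lam) := by ring
        rw [intervalIntegral.integral_const_mul, int_exp_eval hlam' t s₀ t] at this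
        simpa [hE₀def] using this
      -- combine and compute
      have e2 : lam ^ (μ - 1) = (lam ^ (-μ) * lam)⁻¹ := by
        rw [← Real.rpow_add_one hlam'.ne' (-μ), ← Real.rpow_neg hlam'.le]
        congr 1; ring
      have e1 : (1 - μ) ^ (-μ) = (1 - μ) ^ (1 - μ) / (1 - μ) := by
        rw [show (-μ:ℝ) = (1 - μ) - 1 by ring, Real.rpow_sub_one hc.ne']
      have e3 : lam ^ ((1:ℝ) - μ) = lam ^ (-μ) * lam := by
        rw [← Real.rpow_add_one hlam'.ne' (-μ)]; congr 1; ring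
      have key1 : s₀ ^ (1 - μ) / (1 - μ) = (1 - μ) ^ (-μ) * lam ^ (μ - 1) := by
        rw [hs₀def, Real.div_rpow hc.le hlam'.le, e2, e1, e3]; ring
      have key2 : s₀ ^ (-μ) / lam = (1 - μ) ^ (-μ) * lam ^ (μ - 1) := by
        rw [hs₀def, Real.div_rpow hc.le hlam'.le, e2]; ring
      have hsum : lam ^ α * E₀ * (s₀ ^ (1 - μ) / (1 - μ))
            + s₀ ^ (-μ) * lam ^ α * ((1 - E₀) / lam)
          = lam ^ α * ((1 - μ) ^ (-μ) * lam ^ (μ - 1)) := by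
        have : s₀ ^ (-μ) * lam ^ α * ((1 - E₀) / lam)
            = lam ^ α * (1 - E₀) * (s₀ ^ (-μ) / lam) := by ring
        rw [this, key1, key2]; ring
      have final : lam ^ α * ((1 - μ) ^ (-μ) * lam ^ (μ - 1))
          ≤ t ^ (1 - α - μ) * (1 - μ) ^ (α - 1) := by
        have h1 : lam ^ α * lam ^ (μ - 1) = lam ^ (α + μ - 1) := by
          rw [← Real.rpow_add hlam']; congr 1; ring
        have h2 : lam ^ (α + μ - 1) ≤ ((1 - μ) / t) ^ (α + μ - 1) := by
          apply Real.rpow_le_rpow_of_nonpos (by positivity) _ (by linarith)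
          rw [div_le_iff₀ ht]; nlinarith
        have h3 : ((1 - μ) / t) ^ (α + μ - 1) = (1 - μ) ^ (α + μ - 1) * t ^ (1 - α - μ) := by
          rw [Real.div_rpow hc.le ht.le, show (1:ℝ) - α - μ = -(α + μ - 1) by ring,
            Real.rpow_neg ht.le, div_eq_mul_inv]
        have h4 : (1 - μ) ^ (-μ) * (1 - μ) ^ (α + μ - 1) = (1 - μ) ^ (α - 1) := by
          rw [← Real.rpow_add hc]; congr 1; ring
        calc lam ^ α * ((1 - μ) ^ (-μ) * lam ^ (μ - 1))
            = (1 - μ) ^ (-μ) * (lam ^ α * lam ^ (μ - 1)) := by ring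
          _ = (1 - μ) ^ (-μ) * lam ^ (α + μ - 1) := by rw [h1]
          _ ≤ (1 - μ) ^ (-μ) * ((1 - μ) ^ (α + μ - 1) * t ^ (1 - α - μ)) := by
              rw [← h3]
              exact mul_le_mul_of_nonneg_left h2 (by positivity)
          _ = ((1 - μ) ^ (-μ) * (1 - μ) ^ (α + μ - 1)) * t ^ (1 - α - μ) := by ring
          _ = t ^ (1 - α - μ) * (1 - μ) ^ (α - 1) := by rw [h4]; ring
      calc _ ≤ lam ^ α * E₀ * (s₀ ^ (1 - μ) / (1 - μ))
            + s₀ ^ (-μ) * lam ^ α * ((1 - E₀) / lam) := add_le_add hJ1 hJ2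
        _ = lam ^ α * ((1 - μ) ^ (-μ) * lam ^ (μ - 1)) := hsum
        _ ≤ t ^ (1 - α - μ) * (1 - μ) ^ (α - 1) := final


/-- Lemma 5.12: for a bounded non-negative self-adjoint operator `L` on a complex
Hilbert space, `0 ≤ α ≤ 1`, `0 ≤ μ < 1`, `α + μ ≤ 1`, `δ = 1 - α - μ` and `t > 0`,
`‖∫₀ᵗ s^{-μ} L^α e^{-(t-s)L} ds‖ ≤ t^δ (1-μ)^{α-1}`. -/
theorem operator_integral_estimate_lemma512
    {H : Type*} [NormedAddCommGroup H] [InnerProductSpace ℂ H] [CompleteSpace H]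
    (L : H →L[ℂ] H) (hLsa : IsSelfAdjoint L) (hLpos : ∀ x : H, 0 ≤ (inner ℂ (L x) x : ℂ).re)
    (α μ δ : ℝ) (hα0 : 0 ≤ α) (hα1 : α ≤ 1) (hμ0 : 0 ≤ μ) (hμ1 : μ < 1) (hαμ : α + μ ≤ 1)
    (hδ : δ = 1 - α - μ) (t : ℝ) (ht : 0 < t) :
    ‖∫ s in Set.Ioo (0:ℝ) t, s ^ (-μ) • opPow L α (t - s)‖ ≤ t ^ δ * (1 - μ) ^ (α - 1) := by
  rcases subsingleton_or_nontrivial H with hH | hH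
  · have h0 : (∫ s in Set.Ioo (0:ℝ) t, s ^ (-μ) • opPow L α (t - s)) = 0 :=
      Subsingleton.elim _ _
    rw [h0, norm_zero]
    have hc : (0:ℝ) < 1 - μ := by linarith
    positivity
  have hc : (0:ℝ) < 1 - μ := by linarith
  have hRHS : (0:ℝ) ≤ t ^ δ * (1 - μ) ^ (α - 1) := by positivity
  -- spectrum facts
  have hLpos' : L.IsPositive := ContinuousLinearMap.isPositive_def'.mpr ⟨hLsa, fun x => by simpa [ContinuousLinearMap.reApplyInnerSelf] using hLpos x⟩
  have hspec : ∀ x ∈ spectrum ℝ L, (0:ℝ) ≤ x :=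
    SpectrumRestricts.nnreal_iff.mp hLpos'.spectrumRestricts
  -- the continuous functions
  have hfc : ∀ s : ℝ, Continuous fun lam : ℝ => lam ^ α * Real.exp (-(t - s) * lam) :=
    fun s => (continuous_rpow_const' hα0).mul (Real.continuous_exp.comp (by continuity))
  set K := spectrum ℝ L with hK
  let Fc : ℝ → C(K, ℝ) := fun s =>
    ⟨fun lam => (lam : ℝ) ^ α * Real.exp (-(t - s) * (lam : ℝ)),
      ((hfc s).comp continuous_subtype_val)⟩
  have hFcont : Continuous Fc := by
    apply ContinuousMap.continuous_of_continuous_uncurry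
    have : Continuous fun p : ℝ × K => (p.2 : ℝ) ^ α * Real.exp (-(t - p.1) * (p.2 : ℝ)) := by
      apply Continuous.mul
      · exact (continuous_rpow_const' hα0).comp (continuous_subtype_val.comp continuous_snd)
      · exact Real.continuous_exp.comp (by continuity)
    exact this
  let G : ℝ → C(K, ℝ) := fun s => s ^ (-μ) • Fc s
  -- bound on ‖Fc s‖
  set M := max 1 ‖L‖ with hM
  have hM0 : (0:ℝ) ≤ M := le_trans zero_le_one (le_max_left _ _)
  have hFc_norm : ∀ s ∈ Ioo (0:ℝ) t, ‖Fc s‖ ≤ M := by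
    intro s hs
    rw [ContinuousMap.norm_le _ hM0]
    rintro ⟨x, hx⟩
    have hx0 : (0:ℝ) ≤ x := hspec x hx
    have hxL : x ≤ ‖L‖ := by
      simpa [abs_of_nonneg hx0] using spectrum.norm_le_norm_of_mem (𝕜 := ℝ) hx
    have h1 : x ^ α ≤ M := by
      rcases le_or_gt x 1 with h | h
      · exact le_trans (Real.rpow_le_one hx0 h hα0) (le_max_left _ _)
      · calc x ^ α ≤ x ^ (1:ℝ) := Real.rpow_le_rpow_of_exponent_le h.le hα1
          _ = x := Real.rpow_one x
          _ ≤ M := le_trans hxL (le_max_right _ _)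
    have h2 : Real.exp (-(t - s) * x) ≤ 1 := by
      rw [Real.exp_le_one_iff]
      have : 0 ≤ (t - s) * x := mul_nonneg (by linarith [hs.2]) hx0
      linarith
    have h3 : (0:ℝ) ≤ x ^ α := Real.rpow_nonneg hx0 _
    show ‖x ^ α * Real.exp (-(t - s) * x)‖ ≤ M
    rw [Real.norm_eq_abs, abs_of_nonneg (mul_nonneg h3 (Real.exp_pos _).le)]
    calc x ^ α * Real.exp (-(t - s) * x) ≤ x ^ α * 1 := by
          exact mul_le_mul_of_nonneg_left h2 h3
      _ = x ^ α := mul_one _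
      _ ≤ M := h1
  -- integrability of G
  have hGint : IntegrableOn G (Ioo 0 t) := by
    have hmaj : IntegrableOn (fun s : ℝ => M * s ^ (-μ)) (Ioo 0 t) := by
      have h1 : IntervalIntegrable (fun s : ℝ => s ^ (-μ)) volume 0 t :=
        intervalIntegrable_rpow' (by linarith)
      rw [intervalIntegrable_iff_integrableOn_Ioc_of_le ht.le] at h1
      exact IntegrableOn.mono_set (h1.const_mul _) Ioo_subset_Ioc_self
    refine Integrable.mono' hmaj ?_ ?_
    · apply ContinuousOn.aestronglyMeasurable _ measurableSet_Ioo
      apply ContinuousOn.fun_smul _ hFcont.continuousOn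
      exact ContinuousOn.rpow_const continuousOn_id (fun x hx => Or.inl (ne_of_gt hx.1))
    · filter_upwards [ae_restrict_mem measurableSet_Ioo] with s hs
      have h0 : (0:ℝ) ≤ s ^ (-μ) := Real.rpow_nonneg hs.1.le _
      calc ‖G s‖ = ‖s ^ (-μ)‖ * ‖Fc s‖ := norm_smul (s ^ (-μ)) (Fc s)
        _ ≤ ‖s ^ (-μ)‖ * M := mul_le_mul_of_nonneg_left (hFc_norm s hs) (norm_nonneg _)
        _ = M * s ^ (-μ) := by rw [Real.norm_eq_abs, abs_of_nonneg h0]; ring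
  -- the CLM version of cfcHom
  let Φ : C(K, ℝ) →L[ℝ] (H →L[ℂ] H) :=
    { toLinearMap := (cfcHom hLsa (R := ℝ)).toAlgHom.toLinearMap
      cont := (isometry_cfcHom (p := IsSelfAdjoint) L hLsa).continuous }
  have hΦ : ∀ g : C(K, ℝ), Φ g = cfcHom hLsa (R := ℝ) g := fun g => rfl
  have hopPow : ∀ s : ℝ, opPow L α (t - s) = Φ (Fc s) := by
    intro s
    rw [hΦ, opPow,
      cfc_apply (fun lam : ℝ => lam ^ α * Real.exp (-(t - s) * lam)) L hLsa
        ((hfc s).continuousOn)]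
    congr 1
  have hGs : ∀ s : ℝ, s ^ (-μ) • opPow L α (t - s) = Φ (G s) := by
    intro s
    rw [hopPow s]
    exact (map_smul Φ (s ^ (-μ)) (Fc s)).symm
  simp only [hGs]
  rw [ContinuousLinearMap.integral_comp_comm Φ hGint, hΦ,
    norm_cfcHom (a := L) _ hLsa]
  apply (ContinuousMap.norm_le _ hRHS).mpr
  rintro ⟨x, hx⟩
  have hevals : (∫ s in Set.Ioo (0:ℝ) t, G s) (⟨x, hx⟩ : K)
      = ∫ s in Set.Ioo (0:ℝ) t, (G s) (⟨x, hx⟩ : K) :=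
    (ContinuousLinearMap.integral_comp_comm
      (ContinuousMap.evalCLM ℝ (⟨x, hx⟩ : K)) hGint).symm
  rw [hevals]
  have hGsx : ∀ s : ℝ, (G s) (⟨x, hx⟩ : K)
      = s ^ (-μ) * (x ^ α * Real.exp (-(t - s) * x)) := fun s => rfl
  simp only [hGsx]
  have hnn : 0 ≤ ∫ s in Set.Ioo (0:ℝ) t, s ^ (-μ) * (x ^ α * Real.exp (-(t - s) * x)) := by
    apply setIntegral_nonneg measurableSet_Ioo
    intro s hs
    exact mul_nonneg (Real.rpow_nonneg hs.1.le _)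
      (mul_nonneg (Real.rpow_nonneg (hspec x hx) _) (Real.exp_pos _).le)
  rw [Real.norm_eq_abs, abs_of_nonneg hnn, hδ]
  exact scalar_bound512 hα0 hμ0 hμ1 hαμ ht (hspec x hx)
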